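/- Suppose r ≥ 1 and a_1,…,a_r ∈ ℤ^n form a ℤ-basis of the exponent lattice U_λ, i.e., U_λ = ℤ·a_1 ⊕ ℤ·a_2 ⊕ ⋯ ⊕ ℤ·a_r. Then the constant field Const_σ K = {f ∈ K | σ(f) = f} equals F(α^{a_1}, α^{a_2}, …, α^{a_r}), the subfield of K generated by F together with the Laurent monomials α^{a_1},…,α^{a_r}. -/

import Mathlib

open MvPolynomial

/-- `K F n` is the rational function field `F(α₁,…,αₙ)`. -/
abbrev K (F : Type*) [Field F] (n : ℕ) := FractionRing (MvPolynomial (Fin n) F)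

/-- The canonical image of the variable `αᵢ` in `K F n`. -/
noncomputable def α {F : Type*} [Field F] {n : ℕ} (i : Fin n) : K F n :=
  algebraMap (MvPolynomial (Fin n) F) (K F n) (X i)

/-- The Laurent monomial `α^a = α₁^{a₁}⋯αₙ^{aₙ} ∈ K` for an integer multi-index `a ∈ ℤⁿ`. -/
noncomputable def laurentMonomial {F : Type*} [Field F] {n : ℕ} (a : Fin n → ℤ) : K F n :=
  ∏ t, (α t : K F n) ^ a t

section Aux
variable {F : Type*} [Field F] {n : ℕ}

lemma alpha_ne_zero (t : Fin n) : (α (F := F) t) ≠ 0 := by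
  intro h
  have : (X t : MvPolynomial (Fin n) F) = 0 :=
    (IsFractionRing.injective (MvPolynomial (Fin n) F) (K F n)) (by simpa [α] using h)
  exact X_ne_zero t this

lemma laurent_ne_zero (b : Fin n → ℤ) : laurentMonomial (F := F) b ≠ 0 :=
  Finset.prod_ne_zero_iff.mpr fun t _ => zpow_ne_zero _ (alpha_ne_zero t)

lemma zpow_fsum {K' : Type*} [Field K'] {g : K'} (hg : g ≠ 0) {ι : Type*} (s : Finset ι)
    (m : ι → ℤ) : g ^ (∑ j ∈ s, m j) = ∏ j ∈ s, g ^ m j := by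
  classical
  induction s using Finset.induction_on with
  | empty => simp
  | @insert _ _ hi ih => rw [Finset.sum_insert hi, Finset.prod_insert hi, zpow_add₀ hg, ih]

lemma laurent_add (b c : Fin n → ℤ) :
    laurentMonomial (F := F) (b + c) = laurentMonomial (F := F) b * laurentMonomial (F := F) c := by
  rw [laurentMonomial, laurentMonomial, laurentMonomial, ← Finset.prod_mul_distrib]
  exact Finset.prod_congr rfl fun t _ => zpow_add₀ (alpha_ne_zero t) _ _

lemma laurent_sum {r : ℕ} (s : Fin r → ℤ) (a : Fin r → Fin n → ℤ) :
    laurentMonomial (F := F) (∑ j, s j • a j) = ∏ j, laurentMonomial (F := F) (a j) ^ s j := by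
  rw [laurentMonomial]
  have h1 : ∀ t : Fin n, (α (F := F) t) ^ ((∑ j, s j • a j) t)
      = ∏ j, ((α (F := F) t) ^ (a j t)) ^ (s j) := by
    intro t
    have h2 : (∑ j, s j • a j) t = ∑ j, (a j t * s j) := by
      simp [Finset.sum_apply, mul_comm]
    rw [h2, zpow_fsum (alpha_ne_zero t)]
    exact Finset.prod_congr rfl fun j _ => zpow_mul _ _ _
  rw [Finset.prod_congr rfl fun t _ => h1 t, Finset.prod_comm]
  exact Finset.prod_congr rfl fun j _ => by rw [laurentMonomial, ← Finset.prod_zpow]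

noncomputable def tau (lam : Fin n → F) :
    MvPolynomial (Fin n) F →ₐ[F] MvPolynomial (Fin n) F :=
  aeval fun i => C (lam i) * X i

lemma tau_comp (lam mu : Fin n → F) (x) :
    tau lam (tau mu x) = tau (fun i => lam i * mu i) x := by
  have : (tau lam).comp (tau mu) = tau (fun i => lam i * mu i) := by
    apply algHom_ext
    intro i
    simp only [AlgHom.comp_apply, tau, aeval_X, map_mul, aeval_C, algebraMap_eq]
    ring
  exact DFunLike.congr_fun this x

noncomputable def tauEquiv (lam : Fin n → F) (hlam : ∀ i, lam i ≠ 0) :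
    MvPolynomial (Fin n) F ≃ₐ[F] MvPolynomial (Fin n) F :=
  AlgEquiv.ofAlgHom (tau lam) (tau fun i => (lam i)⁻¹)
    (by
      apply algHom_ext
      intro i
      have := tau_comp lam (fun i => (lam i)⁻¹) (X i)
      simp only [AlgHom.comp_apply, AlgHom.id_apply]
      rw [this]
      simp only [tau, aeval_X]
      rw [mul_inv_cancel₀ (hlam i), C_1, one_mul])
    (by
      apply algHom_ext
      intro i
      have := tau_comp (fun i => (lam i)⁻¹) lam (X i)
      simp only [AlgHom.comp_apply, AlgHom.id_apply]
      rw [this]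
      simp only [tau, aeval_X]
      rw [inv_mul_cancel₀ (hlam i), C_1, one_mul])

@[simp] lemma tauEquiv_apply (lam : Fin n → F) (hlam : ∀ i, lam i ≠ 0) (x) :
    tauEquiv lam hlam x = tau lam x := rfl

lemma tau_monomial (lam : Fin n → F) (d : Fin n →₀ ℕ) (c : F) :
    tau lam (monomial d c) = monomial d ((∏ t, lam t ^ d t) * c) := by
  have h0 : (monomial d c : MvPolynomial (Fin n) F) = C c * ∏ t, X t ^ d t := by
    rw [monomial_eq, Finsupp.prod_pow]
  have h1 : (monomial d ((∏ t, lam t ^ d t) * c) : MvPolynomial (Fin n) F)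
      = C ((∏ t, lam t ^ d t) * c) * ∏ t, X t ^ d t := by
    rw [monomial_eq, Finsupp.prod_pow]
  rw [h0, h1, map_mul, map_prod]
  have h2 : ∀ t : Fin n, tau lam (X t ^ d t) = C (lam t ^ d t) * X t ^ d t := by
    intro t
    rw [map_pow, tau, aeval_X, mul_pow, ← C_pow]
  rw [Finset.prod_congr rfl fun t _ => h2 t, Finset.prod_mul_distrib,
    ← map_prod (C : F →+* MvPolynomial (Fin n) F)]
  have h3 : tau lam (C c) = C c := by rw [tau, aeval_C, algebraMap_eq]
  rw [h3, C_mul]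
  ring

lemma coeff_tau (lam : Fin n → F) (p : MvPolynomial (Fin n) F) (e : Fin n →₀ ℕ) :
    coeff e (tau lam p) = (∏ t, lam t ^ e t) * coeff e p := by
  induction p using MvPolynomial.induction_on' with
  | monomial d c =>
    rw [tau_monomial, coeff_monomial, coeff_monomial]
    split
    · next h => subst h; rfl
    · rw [mul_zero]
  | add p q hp hq => rw [map_add, coeff_add, coeff_add, hp, hq, mul_add]

lemma isUnit_eq_C : ∀ {m : ℕ} (w : MvPolynomial (Fin m) F), IsUnit w → ∃ c : F, w = C c := by
  intro m
  induction m with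
  | zero =>
    intro w _
    exact ⟨_, eq_C_of_isEmpty w⟩
  | succ m ih =>
    intro w hw
    have hP : IsUnit (finSuccEquiv F m w) := hw.map (finSuccEquiv F m)
    obtain ⟨r, hr, hrP⟩ := Polynomial.isUnit_iff.mp hP
    obtain ⟨c, rfl⟩ := ih r hr
    refine ⟨c, ?_⟩
    have h1 := congrArg (finSuccEquiv F m).symm hrP
    rw [AlgEquiv.symm_apply_apply] at h1
    rw [← h1]
    exact DFunLike.congr_fun (finSuccEquiv_comp_C_eq_C m) c

lemma algebraMap_monomial (e : Fin n →₀ ℕ) (c : F) :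
    algebraMap (MvPolynomial (Fin n) F) (K F n) (monomial e c)
      = algebraMap F (K F n) c * laurentMonomial (fun t => (e t : ℤ)) := by
  rw [monomial_eq, Finsupp.prod_pow, map_mul]
  have hC : algebraMap (MvPolynomial (Fin n) F) (K F n) (C c) = algebraMap F (K F n) c := by
    rw [← algebraMap_eq, ← IsScalarTower.algebraMap_apply]
  have hX : algebraMap (MvPolynomial (Fin n) F) (K F n) (∏ t, X t ^ e t)
      = laurentMonomial (fun t => (e t : ℤ)) := by
    rw [map_prod, laurentMonomial]
    exact Finset.prod_congr rfl fun t _ => by rw [map_pow, ← zpow_natCast]; rfl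
  rw [hC, hX]

lemma algebraMap_eq_sum (p : MvPolynomial (Fin n) F) :
    algebraMap (MvPolynomial (Fin n) F) (K F n) p
      = ∑ e ∈ p.support, algebraMap F (K F n) (coeff e p)
          * laurentMonomial (fun t => (e t : ℤ)) := by
  conv_lhs => rw [p.as_sum]
  rw [map_sum]
  exact Finset.sum_congr rfl fun e _ => algebraMap_monomial _ _

lemma sigma_algebraMap {lam : Fin n → F} (σ : K F n ≃ₐ[F] K F n)
    (hσ : ∀ i, σ (α i) = algebraMap F (K F n) (lam i) * α i) (p : MvPolynomial (Fin n) F) :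
    σ (algebraMap (MvPolynomial (Fin n) F) (K F n) p)
      = algebraMap (MvPolynomial (Fin n) F) (K F n) (tau lam p) := by
  have h : σ.toAlgHom.comp (IsScalarTower.toAlgHom F (MvPolynomial (Fin n) F) (K F n))
      = (IsScalarTower.toAlgHom F (MvPolynomial (Fin n) F) (K F n)).comp (tau lam) := by
    apply algHom_ext
    intro i
    simp only [AlgHom.comp_apply, IsScalarTower.toAlgHom_apply, AlgEquiv.toAlgHom_eq_coe,
      AlgHom.coe_coe]
    have h0 : algebraMap (MvPolynomial (Fin n) F) (K F n) (X i) = α i := rfl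
    have h1 : algebraMap (MvPolynomial (Fin n) F) (K F n) (C (lam i))
        = algebraMap F (K F n) (lam i) := by
      rw [← algebraMap_eq, ← IsScalarTower.algebraMap_apply]
    rw [h0]; refine (hσ i).trans ?_; rw [tau, aeval_X, map_mul, h1, h0]
  exact DFunLike.congr_fun h p

end Aux

/-- Let `σ` be the `F`-algebra automorphism of `K = F(α₁,…,αₙ)` with
`σ(αᵢ) = λᵢ αᵢ` (all `λᵢ ∈ F` nonzero). Suppose `r ≥ 1` and `a₁,…,a_r ∈ ℤⁿ` form a ℤ-basis
of the exponent lattice `U_λ = {i ∈ ℤⁿ | λ^i = 1}`, i.e. `U_λ = ℤa₁ ⊕ ⋯ ⊕ ℤa_r`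
(every element of `U_λ` is a ℤ-linear combination of the `aⱼ`, conversely each such
combination lies in `U_λ`, and the `aⱼ` are ℤ-linearly independent). Then the constant field
`{f ∈ K | σ(f) = f}` equals the subfield `F(α^{a₁},…,α^{a_r})` of `K` generated by `F`
together with the Laurent monomials `α^{a₁},…,α^{a_r}`. -/
theorem stmt_3 {F : Type*} [Field F] [Algebra F (AlgebraicClosure ℚ)]
    {n : ℕ} (hn : 1 ≤ n)
    (lam : Fin n → F) (hlam : ∀ i, lam i ≠ 0)
    (σ : K F n ≃ₐ[F] K F n)
    (hσ : ∀ i, σ (α i) = algebraMap F (K F n) (lam i) * α i)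
    (r : ℕ) (hr : 1 ≤ r) (a : Fin r → Fin n → ℤ)
    (hbasis : ∀ i : Fin n → ℤ,
      (∏ t, lam t ^ i t) = 1 ↔ ∃ s : Fin r → ℤ, i = ∑ j, s j • a j)
    (hindep : ∀ s : Fin r → ℤ, (∑ j, s j • a j) = 0 → s = 0) :
    {f : K F n | σ f = f} =
      (Subfield.closure (Set.range (algebraMap F (K F n)) ∪
        Set.range (fun j : Fin r => laurentMonomial (F := F) (a j))) : Set (K F n)) := by
  classical
  have hcompat : ∀ x, σ (algebraMap (MvPolynomial (Fin n) F) (K F n) x)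
      = algebraMap (MvPolynomial (Fin n) F) (K F n) (tau lam x) := sigma_algebraMap σ hσ
  set S : Subfield (K F n) := Subfield.closure (Set.range (algebraMap F (K F n)) ∪
        Set.range (fun j : Fin r => laurentMonomial (F := F) (a j))) with hS
  have hlamone : ∀ j : Fin r, (∏ t, lam t ^ a j t) = 1 := by
    intro j
    refine (hbasis (a j)).mpr ⟨Pi.single j 1, ?_⟩
    rw [Finset.sum_eq_single j]
    · simp
    · intro b _ hb
      rw [Pi.single_eq_of_ne hb, zero_smul]
    · intro h; exact absurd (Finset.mem_univ j) h
  have hlaurS : ∀ b : Fin n → ℤ, (∏ t, lam t ^ b t) = 1 → laurentMonomial (F := F) b ∈ S := by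
    intro b hb
    obtain ⟨s, hs⟩ := (hbasis b).mp hb
    rw [hs, laurent_sum]
    exact prod_mem fun j _ =>
      Subfield.zpow_mem S (Subfield.subset_closure (Or.inr ⟨j, rfl⟩)) (s j)
  ext f
  simp only [Set.mem_setOf_eq, SetLike.mem_coe]
  constructor
  · -- hard direction : σ f = f → f ∈ S
    intro hf
    by_cases hf0 : f = 0
    · rw [hf0]; exact Subfield.zero_mem S
    set p := IsFractionRing.num (MvPolynomial (Fin n) F) f with hpdef
    set q : MvPolynomial (Fin n) F :=
      ((IsFractionRing.den (MvPolynomial (Fin n) F) f :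
        nonZeroDivisors (MvPolynomial (Fin n) F)) : MvPolynomial (Fin n) F) with hqdef
    have hq0 : q ≠ 0 := nonZeroDivisors.coe_ne_zero _
    have hp0 : p ≠ 0 := fun h => hf0 ((IsFractionRing.num_eq_zero f).mp h)
    have hqK : algebraMap (MvPolynomial (Fin n) F) (K F n) q ≠ 0 := fun h =>
      hq0 (IsFractionRing.injective (MvPolynomial (Fin n) F) (K F n) (by rw [h, map_zero]))
    have hfd : algebraMap (MvPolynomial (Fin n) F) (K F n) p
        / algebraMap (MvPolynomial (Fin n) F) (K F n) q = f :=
      IsFractionRing.mk'_num_den' _ f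
    have key : ∀ (σ' : K F n ≃ₐ[F] K F n)
        (τ' : MvPolynomial (Fin n) F ≃ₐ[F] MvPolynomial (Fin n) F),
        (∀ x, σ' (algebraMap (MvPolynomial (Fin n) F) (K F n) x)
          = algebraMap (MvPolynomial (Fin n) F) (K F n) (τ' x)) → σ' f = f →
        τ' p * q = p * τ' q := by
      intro σ' τ' hc hfix
      have hτqK : algebraMap (MvPolynomial (Fin n) F) (K F n) (τ' q) ≠ 0 := fun h => by
        have h' : τ' q = 0 :=
          IsFractionRing.injective (MvPolynomial (Fin n) F) (K F n) (by rw [h, map_zero])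
        exact hq0 (by simpa using (map_eq_zero_iff τ' τ'.injective).mp h')
      have h1 : algebraMap (MvPolynomial (Fin n) F) (K F n) (τ' p)
          / algebraMap (MvPolynomial (Fin n) F) (K F n) (τ' q)
          = algebraMap (MvPolynomial (Fin n) F) (K F n) p
          / algebraMap (MvPolynomial (Fin n) F) (K F n) q := by
        rw [← hc p, ← hc q, ← map_div₀, hfd, hfix, ← hfd]
      have h2 := (div_eq_div_iff hτqK hqK).mp h1
      exact IsFractionRing.injective (MvPolynomial (Fin n) F) (K F n)
        (by rw [map_mul, map_mul]; exact h2)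
    have hcompat' : ∀ x, σ (algebraMap (MvPolynomial (Fin n) F) (K F n) x)
        = algebraMap (MvPolynomial (Fin n) F) (K F n) (tauEquiv lam hlam x) := by
      intro x; rw [tauEquiv_apply]; exact hcompat x
    have hcomps : ∀ x, σ.symm (algebraMap (MvPolynomial (Fin n) F) (K F n) x)
        = algebraMap (MvPolynomial (Fin n) F) (K F n) ((tauEquiv lam hlam).symm x) := by
      intro x
      apply σ.injective
      rw [AlgEquiv.apply_symm_apply, hcompat' ((tauEquiv lam hlam).symm x),
        AlgEquiv.apply_symm_apply]
    have hfs : σ.symm f = f := by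
      apply σ.injective
      rw [AlgEquiv.apply_symm_apply, hf]
    have heq := key σ (tauEquiv lam hlam) hcompat' hf
    have heqs := key σ.symm (tauEquiv lam hlam).symm hcomps hfs
    have hrel : IsRelPrime p q := IsFractionRing.num_den_reduced _ f
    have hd1 : p ∣ tauEquiv lam hlam p := hrel.dvd_of_dvd_mul_right ⟨_, heq⟩
    have hd2 : p ∣ (tauEquiv lam hlam).symm p := hrel.dvd_of_dvd_mul_right ⟨_, heqs⟩
    have hd3 : tauEquiv lam hlam p ∣ p := by
      obtain ⟨w, hw⟩ := hd2
      exact ⟨tauEquiv lam hlam w, by rw [← map_mul, ← hw, AlgEquiv.apply_symm_apply]⟩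
    obtain ⟨w, hw⟩ := hd1
    have hwu : IsUnit w := by
      obtain ⟨v, hv⟩ := hd3
      have h5 : p * (w * v) = p * 1 := by
        rw [mul_one, ← mul_assoc, ← hw, ← hv]
      exact IsUnit.of_mul_eq_one v (mul_left_cancel₀ hp0 h5)
    obtain ⟨c, rfl⟩ := isUnit_eq_C w hwu
    rw [tauEquiv_apply] at hw
    have hΛp : ∀ e ∈ p.support, (∏ t, lam t ^ e t) = c := by
      intro e he
      have h := congrArg (coeff e) hw
      rw [coeff_tau, mul_comm p, coeff_C_mul] at h
      exact mul_right_cancel₀ (mem_support_iff.mp he) h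
    have hτq : tau lam q = q * C c := by
      have heq' : tau lam p * q = p * tau lam q := heq
      have h6 : p * (q * C c) = p * tau lam q := by
        linear_combination heq' - q * hw
      exact (mul_left_cancel₀ hp0 h6).symm
    have hΛq : ∀ e ∈ q.support, (∏ t, lam t ^ e t) = c := by
      intro e he
      have h := congrArg (coeff e) hτq
      rw [coeff_tau, mul_comm q, coeff_C_mul] at h
      exact mul_right_cancel₀ (mem_support_iff.mp he) h
    obtain ⟨e0, he0⟩ := support_nonempty.mpr hq0
    have hc0 : c ≠ 0 := by
      rw [← hΛq e0 he0]
      exact Finset.prod_ne_zero_iff.mpr fun t _ => pow_ne_zero _ (hlam t)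
    have hvS : ∀ e : Fin n →₀ ℕ, (∏ t, lam t ^ e t) = c →
        laurentMonomial (F := F) (fun t => (e t : ℤ) - (e0 t : ℤ)) ∈ S := by
      intro e he
      apply hlaurS
      have h7 : ∀ t : Fin n, lam t ^ ((e t : ℤ) - (e0 t : ℤ))
          = lam t ^ (e t : ℤ) / lam t ^ (e0 t : ℤ) := fun t => zpow_sub₀ (hlam t) _ _
      rw [Finset.prod_congr rfl fun t _ => h7 t, Finset.prod_div_distrib]
      have hzn : ∀ d : Fin n →₀ ℕ, (∏ t, lam t ^ (d t : ℤ)) = ∏ t, lam t ^ d t :=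
        fun d => Finset.prod_congr rfl fun t _ => zpow_natCast _ _
      rw [hzn e, hzn e0, he, hΛq e0 he0, div_self hc0]
    set M : K F n := laurentMonomial (F := F) (fun t => (e0 t : ℤ)) with hM
    have hMne : M ≠ 0 := laurent_ne_zero _
    have hsplit : ∀ x : MvPolynomial (Fin n) F, (∀ e ∈ x.support, (∏ t, lam t ^ e t) = c) →
        ∃ N ∈ S, N * M = algebraMap (MvPolynomial (Fin n) F) (K F n) x := by
      intro x hx
      refine ⟨∑ e ∈ x.support, algebraMap F (K F n) (coeff e x)
          * laurentMonomial (F := F) (fun t => (e t : ℤ) - (e0 t : ℤ)), ?_, ?_⟩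
      · exact sum_mem fun e he => Subfield.mul_mem S
          (Subfield.subset_closure (Or.inl ⟨_, rfl⟩)) (hvS e (hx e he))
      · rw [Finset.sum_mul, algebraMap_eq_sum]
        refine Finset.sum_congr rfl fun e he => ?_
        rw [mul_assoc]
        congr 1
        rw [hM, ← laurent_add]
        congr 1
        funext t
        simp
    obtain ⟨N, hNS, hNM⟩ := hsplit p hΛp
    obtain ⟨D, hDS, hDM⟩ := hsplit q hΛq
    have hD0 : D ≠ 0 := fun h => hqK (by rw [← hDM, h, zero_mul])
    have hfND : f = N / D := by
      rw [← hfd, ← hNM, ← hDM, mul_div_mul_right _ _ hMne]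
    rw [hfND]
    exact Subfield.div_mem S hNS hDS
  · -- easy direction
    intro hfS
    let Fix : Subfield (K F n) :=
      { carrier := {g : K F n | σ g = g}
        mul_mem' := fun {x y} hx hy => by
          simp only [Set.mem_setOf_eq] at *
          rw [map_mul, hx, hy]
        one_mem' := map_one σ
        add_mem' := fun {x y} hx hy => by
          simp only [Set.mem_setOf_eq] at *
          rw [map_add, hx, hy]
        zero_mem' := map_zero σ
        neg_mem' := fun {x} hx => by
          simp only [Set.mem_setOf_eq] at *
          rw [map_neg, hx]
        inv_mem' := fun x hx => by
          simp only [Set.mem_setOf_eq] at *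
          rw [map_inv₀, hx] }
    have hle : S ≤ Fix := by
      rw [hS]
      apply Subfield.closure_le.mpr
      rintro x (⟨cF, rfl⟩ | ⟨j, rfl⟩)
      · exact σ.commutes cF
      · show σ (laurentMonomial (F := F) (a j)) = laurentMonomial (F := F) (a j)
        rw [laurentMonomial, map_prod]
        have h7 : ∀ t, σ (α t ^ a j t)
            = algebraMap F (K F n) (lam t) ^ a j t * α t ^ a j t := by
          intro t; rw [map_zpow₀, hσ t, mul_zpow]
        rw [Finset.prod_congr rfl fun t _ => h7 t, Finset.prod_mul_distrib]
        have h8 : (∏ t, algebraMap F (K F n) (lam t) ^ a j t)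
            = algebraMap F (K F n) (∏ t, lam t ^ a j t) := by
          rw [map_prod]
          exact Finset.prod_congr rfl fun t _ => (map_zpow₀ (algebraMap F (K F n)) _ _).symm
        rw [h8, hlamone j, map_one, one_mul]
    exact hle hfS
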